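/- Let N be a semiprime natural number with prime factors p and q, p < q. Let f ∈ ℤ[X] with d := deg f, and suppose f is not the zero polynomial modulo p and not the zero polynomial modulo q. If 2d < p, then ν(f) ≤ dp + dq − 2d². -/

import Mathlib

/-- `x ∈ Z_N = {0, ..., N−1}` is suitable for `g ∈ ℤ[X]` if `1 < gcd(g(x), N) < N`;
`nu N g` counts the suitable elements. -/
def nu (N : ℕ) (g : Polynomial ℤ) : ℕ :=
  ((Finset.range N).filter
    (fun (x : ℕ) => 1 < Int.gcd (g.eval ((x : ℤ))) (N : ℤ) ∧
      Int.gcd (g.eval ((x : ℤ))) (N : ℤ) < N)).card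

/-- Structure of divisors of a product of two distinct primes. -/
lemma xor_divisor_lemma (p q m : ℕ) (hp : p.Prime) (hq : q.Prime) (hne : p ≠ q)
    (hm : m ∣ p * q) : (1 < m ∧ m < p * q) ↔ Xor' (p ∣ m) (q ∣ m) := by
  have hpq0 : 0 < p * q := Nat.mul_pos hp.pos hq.pos
  have hm0 : m ≠ 0 := by
    rintro rfl
    exact absurd (Nat.eq_zero_of_zero_dvd hm) (by omega)
  have hcop : Nat.Coprime p q := (Nat.coprime_primes hp hq).mpr hne
  have hmle : m ≤ p * q := Nat.le_of_dvd hpq0 hm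
  by_cases hpm : p ∣ m <;> by_cases hqm : q ∣ m
  · have h1 : p * q ∣ m := hcop.mul_dvd_of_dvd_of_dvd hpm hqm
    have h2 : p * q ≤ m := Nat.le_of_dvd (Nat.pos_of_ne_zero hm0) h1
    simp only [Xor']
    constructor
    · rintro ⟨_, h⟩; omega
    · rintro (⟨_, h⟩ | ⟨_, h⟩)
      · exact absurd hqm h
      · exact absurd hpm h
  · have h1 : p ≤ m := Nat.le_of_dvd (Nat.pos_of_ne_zero hm0) hpm
    have h2 : m ≠ p * q := by rintro rfl; exact hqm (dvd_mul_left q p)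
    constructor
    · intro _; exact Or.inl ⟨hpm, hqm⟩
    · intro _; exact ⟨by have := hp.two_le; omega, by omega⟩
  · have h1 : q ≤ m := Nat.le_of_dvd (Nat.pos_of_ne_zero hm0) hqm
    have h2 : m ≠ p * q := by rintro rfl; exact hpm (dvd_mul_right p q)
    constructor
    · intro _; exact Or.inr ⟨hqm, hpm⟩
    · intro _; exact ⟨by have := hq.two_le; omega, by omega⟩
  · constructor
    · rintro ⟨h1, _⟩
      exfalso
      have hr : m.minFac ∣ p * q := (Nat.minFac_dvd m).trans hm
      have hrp : m.minFac.Prime := Nat.minFac_prime (by omega)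
      rcases (Nat.Prime.dvd_mul hrp).mp hr with h | h
      · exact hpm (((Nat.prime_dvd_prime_iff_eq hrp hp).mp h) ▸ Nat.minFac_dvd m)
      · exact hqm (((Nat.prime_dvd_prime_iff_eq hrp hq).mp h) ▸ Nat.minFac_dvd m)
    · rintro (⟨h, _⟩ | ⟨h, _⟩) <;> exact absurd h ‹_›

set_option maxHeartbeats 1000000 in
/-- Let `N = p * q` be semiprime with primes `p < q`, `f ∈ ℤ[X]` of degree `d`,
nonzero modulo `p` and modulo `q`. If `2d < p`, then `ν(f) ≤ dp + dq − 2d²`. -/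
theorem nu_le_of_semiprime (N p q : ℕ) (hp : p.Prime) (hq : q.Prime) (hpq : p < q)
    (hN : N = p * q) (f : Polynomial ℤ) (d : ℕ) (hd : d = f.natDegree)
    (hfp : f.map (Int.castRingHom (ZMod p)) ≠ 0)
    (hfq : f.map (Int.castRingHom (ZMod q)) ≠ 0)
    (hdp : 2 * d < p) :
    (nu N f : ℤ) ≤ d * p + d * q - 2 * d ^ 2 := by
  subst hN
  classical
  haveI := Fact.mk hp
  haveI := Fact.mk hq
  have hne : p ≠ q := hpq.ne
  have hcop : Nat.Coprime p q := (Nat.coprime_primes hp hq).mpr hne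
  haveI : NeZero (p * q) := ⟨Nat.mul_ne_zero hp.pos.ne' hq.pos.ne'⟩
  set Rp : Finset (ZMod p) := (f.map (Int.castRingHom (ZMod p))).roots.toFinset with hRp
  set Rq : Finset (ZMod q) := (f.map (Int.castRingHom (ZMod q))).roots.toFinset with hRq
  have ha : Rp.card ≤ d := by
    refine (Multiset.toFinset_card_le _).trans ?_
    refine (Polynomial.card_roots' _).trans ?_
    exact le_trans Polynomial.natDegree_map_le (le_of_eq hd.symm)
  have hb : Rq.card ≤ d := by
    refine (Multiset.toFinset_card_le _).trans ?_
    refine (Polynomial.card_roots' _).trans ?_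
    exact le_trans Polynomial.natDegree_map_le (le_of_eq hd.symm)
  -- membership criteria
  have memp : ∀ x : ℕ, ((p : ℤ) ∣ f.eval (x : ℤ)) ↔ ((x : ZMod p) ∈ Rp) := by
    intro x
    rw [hRp, Multiset.mem_toFinset, Polynomial.mem_roots hfp, Polynomial.IsRoot]
    have h1 : ((x : ℕ) : ZMod p) = (((x : ℕ) : ℤ) : ZMod p) := by push_cast; ring
    rw [h1, Polynomial.eval_intCast_map]
    simp [Int.cast_id, ZMod.intCast_zmod_eq_zero_iff_dvd]
  have memq : ∀ x : ℕ, ((q : ℤ) ∣ f.eval (x : ℤ)) ↔ ((x : ZMod q) ∈ Rq) := by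
    intro x
    rw [hRq, Multiset.mem_toFinset, Polynomial.mem_roots hfq, Polynomial.IsRoot]
    have h1 : ((x : ℕ) : ZMod q) = (((x : ℕ) : ℤ) : ZMod q) := by push_cast; ring
    rw [h1, Polynomial.eval_intCast_map]
    simp [Int.cast_id, ZMod.intCast_zmod_eq_zero_iff_dvd]
  -- the suitability condition as a Xor'
  have hcond : ∀ x : ℕ,
      (1 < Int.gcd (f.eval (x : ℤ)) ((p * q : ℕ) : ℤ) ∧
        Int.gcd (f.eval (x : ℤ)) ((p * q : ℕ) : ℤ) < p * q)
      ↔ Xor' ((x : ZMod p) ∈ Rp) ((x : ZMod q) ∈ Rq) := by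
    intro x
    set m : ℕ := Int.gcd (f.eval (x : ℤ)) ((p * q : ℕ) : ℤ) with hmdef
    have hmdvd : m ∣ p * q := by
      have := Int.gcd_dvd_right (a := f.eval (x : ℤ)) (b := ((p * q : ℕ) : ℤ))
      exact_mod_cast this
    have hpm : p ∣ m ↔ (p : ℤ) ∣ f.eval (x : ℤ) := by
      constructor
      · intro h
        exact (Int.natCast_dvd_natCast.mpr h).trans
          (Int.gcd_dvd_left (a := f.eval (x : ℤ)) (b := ((p * q : ℕ) : ℤ)))
      · intro h
        have : (p : ℤ) ∣ (m : ℤ) := Int.dvd_coe_gcd h (by exact_mod_cast dvd_mul_right p q)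
        exact_mod_cast this
    have hqm : q ∣ m ↔ (q : ℤ) ∣ f.eval (x : ℤ) := by
      constructor
      · intro h
        exact (Int.natCast_dvd_natCast.mpr h).trans
          (Int.gcd_dvd_left (a := f.eval (x : ℤ)) (b := ((p * q : ℕ) : ℤ)))
      · intro h
        have : (q : ℤ) ∣ (m : ℤ) := Int.dvd_coe_gcd h (by exact_mod_cast dvd_mul_left q p)
        exact_mod_cast this
    rw [xor_divisor_lemma p q m hp hq hne hmdvd, hpm, hqm, memp, memq]
  -- count via CRT
  have hcount : nu (p * q) f =
      (Finset.univ.filter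
        (fun uv : ZMod p × ZMod q => Xor' (uv.1 ∈ Rp) (uv.2 ∈ Rq))).card := by
    rw [nu]
    refine Finset.card_bij (fun x _ => ((x : ZMod p), (x : ZMod q))) ?_ ?_ ?_
    · intro x hx
      simp only [Finset.mem_filter, Finset.mem_range] at hx
      simp only [Finset.mem_filter, Finset.mem_univ, true_and]
      exact (hcond x).mp (by exact_mod_cast hx.2)
    · intro x hx y hy hxy
      simp only [Finset.mem_filter, Finset.mem_range] at hx hy
      have h1 : x ≡ y [MOD p] := (ZMod.natCast_eq_natCast_iff x y p).mp (congrArg Prod.fst hxy)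
      have h2 : x ≡ y [MOD q] := (ZMod.natCast_eq_natCast_iff x y q).mp (congrArg Prod.snd hxy)
      have h3 : x ≡ y [MOD p * q] := (Nat.modEq_and_modEq_iff_modEq_mul hcop).mp ⟨h1, h2⟩
      have h4 : x % (p * q) = y % (p * q) := h3
      rwa [Nat.mod_eq_of_lt hx.1, Nat.mod_eq_of_lt hy.1] at h4
    · rintro ⟨u, v⟩ huv
      simp only [Finset.mem_filter, Finset.mem_univ, true_and] at huv
      set e := ZMod.chineseRemainder hcop with he
      set z := e.symm (u, v) with hz
      refine ⟨z.val, ?_, ?_⟩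
      · have hlt : z.val < p * q := ZMod.val_lt z
        have hz2 : ((z.val : ℕ) : ZMod (p * q)) = z := ZMod.natCast_rightInverse z
        have he1 : e ((z.val : ℕ) : ZMod (p * q)) = (((z.val : ℕ) : ZMod p), ((z.val : ℕ) : ZMod q)) := by
          rw [map_natCast]
          rfl
        have he2 : e ((z.val : ℕ) : ZMod (p * q)) = (u, v) := by
          rw [hz2, hz]; exact e.apply_symm_apply (u, v)
        have heq : (((z.val : ℕ) : ZMod p), ((z.val : ℕ) : ZMod q)) = (u, v) :=
          he1.symm.trans he2
        have hequ : ((z.val : ℕ) : ZMod p) = u := (Prod.ext_iff.mp heq).1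
        have heqv : ((z.val : ℕ) : ZMod q) = v := (Prod.ext_iff.mp heq).2
        simp only [Finset.mem_filter, Finset.mem_range]
        refine ⟨hlt, ?_⟩
        have := (hcond z.val).mpr (by rw [hequ, heqv]; exact huv)
        exact_mod_cast this
      · have hz2 : ((z.val : ℕ) : ZMod (p * q)) = z := ZMod.natCast_rightInverse z
        have he1 : e ((z.val : ℕ) : ZMod (p * q)) = (((z.val : ℕ) : ZMod p), ((z.val : ℕ) : ZMod q)) := by
          rw [map_natCast]
          rfl
        have he2 : e ((z.val : ℕ) : ZMod (p * q)) = (u, v) := by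
          rw [hz2, hz]; exact e.apply_symm_apply (u, v)
        have heq : (((z.val : ℕ) : ZMod p), ((z.val : ℕ) : ZMod q)) = (u, v) :=
          he1.symm.trans he2
        exact heq
  -- count the product set
  have hsplit : (Finset.univ.filter
      (fun uv : ZMod p × ZMod q => Xor' (uv.1 ∈ Rp) (uv.2 ∈ Rq)))
      = (Rp ×ˢ Rqᶜ) ∪ (Rpᶜ ×ˢ Rq) := by
    ext uv
    rw [Finset.mem_filter]
    simp only [Finset.mem_filter, Finset.mem_univ, true_and, Finset.mem_union,
      Finset.mem_product, Finset.mem_compl, Xor', Xor]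
    tauto
  have hdisj : Disjoint (Rp ×ˢ Rqᶜ) (Rpᶜ ×ˢ Rq) := by
    rw [Finset.disjoint_left]
    rintro ⟨u, v⟩ h1 h2
    simp only [Finset.mem_product, Finset.mem_compl] at h1 h2
    exact h2.1 h1.1
  have hcard : nu (p * q) f = Rp.card * (q - Rq.card) + (p - Rp.card) * Rq.card := by
    rw [hcount, hsplit, Finset.card_union_of_disjoint hdisj, Finset.card_product,
      Finset.card_product, Finset.card_compl, Finset.card_compl, ZMod.card, ZMod.card]
  -- final arithmetic
  rw [hcard]
  have hap : Rp.card ≤ p := le_trans ha (by omega)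
  have hbq : Rq.card ≤ q := le_trans hb (by omega)
  push_cast [Nat.cast_sub hbq, Nat.cast_sub hap]
  have ha' : (Rp.card : ℤ) ≤ d := by exact_mod_cast ha
  have hb' : (Rq.card : ℤ) ≤ d := by exact_mod_cast hb
  have hdp' : 2 * (d : ℤ) < p := by exact_mod_cast hdp
  have hpq' : (p : ℤ) < q := by exact_mod_cast hpq
  have h1 : (0 : ℤ) ≤ ((d : ℤ) - Rp.card) * ((q : ℤ) - 2 * Rq.card) := by
    apply mul_nonneg <;> nlinarith
  have h2 : (0 : ℤ) ≤ ((d : ℤ) - Rq.card) * ((p : ℤ) - 2 * d) := by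
    apply mul_nonneg <;> nlinarith
  nlinarith
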